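/- For any Hurewicz fibration p : E → B and any r ≥ 2, the sequence of sequential parametrized topological complexities is monotone: TC_{r+1}[p : E → B] ≥ TC_r[p : E → B]. -/

import Mathlib

open Set unitInterval

universe u v

/-- `HasSecatLE p k`: the base admits an open cover by `k+1` sets,
each admitting a continuous local section of `p`. -/
def HasSecatLE {E : Type u} {B : Type v} [TopologicalSpace E] [TopologicalSpace B]
    (p : E → B) (k : ℕ) : Prop :=
  ∃ U : Fin (k + 1) → Set B, (∀ i, IsOpen (U i)) ∧ (⋃ i, U i) = Set.univ ∧
    ∀ i, ∃ s : C(U i, E), ∀ x : U i, p (s x) = (x : B)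

/-- The sectional category (Schwarz genus) of a map, valued in `ℕ∞`. -/
noncomputable def secat {E : Type u} {B : Type v} [TopologicalSpace E] [TopologicalSpace B]
    (p : E → B) : ℕ∞ :=
  ⨅ k ∈ {k : ℕ | HasSecatLE p k}, (k : ℕ∞)

/-- A Hurewicz fibration: a continuous map with the homotopy lifting property
with respect to all spaces. -/
def IsHurewiczFibration {E : Type u} {B : Type v} [TopologicalSpace E] [TopologicalSpace B]
    (p : E → B) : Prop :=
  Continuous p ∧
    ∀ (Z : Type (max u v)) [TopologicalSpace Z] (H : C(Z × unitInterval, B)) (h : C(Z, E)),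
      (∀ z, p (h z) = H (z, 0)) →
        ∃ H' : C(Z × unitInterval, E), (∀ z, H' (z, 0) = h z) ∧ ∀ q, p (H' q) = H q

/-- The standard time schedule `t_i = i/(r-1)`, `i = 0, …, r-1` in `[0,1]`. -/
noncomputable def schedule (r : ℕ) (i : Fin r) : unitInterval :=
  Set.projIcc 0 1 zero_le_one ((i : ℝ) / ((r : ℝ) - 1))

/-- The space `E^I_B` of paths in `E` along which `p` is constant. -/
def FibConstPath {E : Type u} {B : Type v} [TopologicalSpace E] [TopologicalSpace B]
    (p : E → B) : Set C(unitInterval, E) :=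
  {α | ∀ s t, p (α s) = p (α t)}

/-- The space `E^r_B` of `r`-tuples in `E` lying in a common fibre of `p`. -/
def ParamSpace {E : Type u} {B : Type v} [TopologicalSpace E] [TopologicalSpace B]
    (p : E → B) (r : ℕ) : Set (Fin r → E) :=
  {e | ∀ i j, p (e i) = p (e j)}

/-- The evaluation fibration `Π_r : E^I_B → E^r_B`. -/
noncomputable def paramEval {E : Type u} {B : Type v} [TopologicalSpace E] [TopologicalSpace B]
    (p : E → B) (r : ℕ) (α : FibConstPath p) : ParamSpace p r :=
  ⟨fun i => α.1 (schedule r i), fun _ _ => α.2 _ _⟩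

/-- The `r`-th sequential parametrized topological complexity `TC_r[p : E → B]`. -/
noncomputable def seqParamTC {E : Type u} {B : Type v} [TopologicalSpace E] [TopologicalSpace B]
    (p : E → B) (r : ℕ) : ℕ∞ :=
  secat (paramEval p r)

/-- The `r`-th sequential topological complexity `TC_r(X)` of a space. -/
noncomputable def seqTC (X : Type u) [TopologicalSpace X] (r : ℕ) : ℕ∞ :=
  secat (fun (α : C(unitInterval, X)) (i : Fin r) => α (schedule r i))

/-- `HasCatLE Y k`: `Y` admits an open cover by `k+1` sets each contractible in `Y`. -/
def HasCatLE (Y : Type u) [TopologicalSpace Y] (k : ℕ) : Prop :=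
  ∃ U : Fin (k + 1) → Set Y, (∀ i, IsOpen (U i)) ∧ (⋃ i, U i) = Set.univ ∧
    ∀ i, ∃ (H : C((U i) × unitInterval, Y)) (y : Y),
      (∀ x, H (x, 0) = (x.1 : Y)) ∧ (∀ x, H (x, 1) = y)

/-- The Lusternik–Schnirelmann category of a space, valued in `ℕ∞`. -/
noncomputable def LScat (Y : Type u) [TopologicalSpace Y] : ℕ∞ :=
  ⨅ k ∈ {k : ℕ | HasCatLE Y k}, (k : ℕ∞)

lemma stmt9_aux {E B : Type u} [TopologicalSpace E] [TopologicalSpace B]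
    (p : E → B) (r : ℕ) (hr : 2 ≤ r) (k : ℕ)
    (h : HasSecatLE (paramEval p (r + 1)) k) : HasSecatLE (paramEval p r) k := by
  obtain ⟨U, hUo, hUc, hUs⟩ := h
  have hr0 : (0 : ℝ) < (r : ℝ) := by exact_mod_cast Nat.lt_of_lt_of_le (by norm_num) hr
  have hr1 : (1 : ℝ) ≤ (r : ℝ) - 1 := by
    have : (2 : ℝ) ≤ (r : ℝ) := by exact_mod_cast hr
    linarith
  set c : ℝ := ((r : ℝ) - 1) / r with hc
  have hc0 : 0 ≤ c := div_nonneg (by linarith) hr0.le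
  have hc1 : c ≤ 1 := (div_le_one hr0).2 (by linarith)
  -- reparametrization φ(t) = t * (r-1)/r
  have φmem : ∀ t : unitInterval, (t : ℝ) * c ∈ Set.Icc (0 : ℝ) 1 := by
    intro t
    constructor
    · exact mul_nonneg t.2.1 hc0
    · calc (t : ℝ) * c ≤ 1 * c := mul_le_mul_of_nonneg_right t.2.2 hc0
        _ = c := one_mul c
        _ ≤ 1 := hc1
  let φ : C(unitInterval, unitInterval) :=
    ⟨fun t => ⟨(t : ℝ) * c, φmem t⟩,
      Continuous.subtype_mk (continuous_subtype_val.mul continuous_const) _⟩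
  -- the map g : Fin (r+1) → Fin r
  let g : Fin (r + 1) → Fin r := fun i => ⟨min i.1 (r - 1), by omega⟩
  have hg : ∀ i : Fin r, g i.castSucc = i := by
    intro i
    apply Fin.ext
    have := i.2
    simp only [g, Fin.castSucc, Fin.coe_castAdd]
    omega
  -- the map j : ParamSpace p r → ParamSpace p (r+1)
  let j : ParamSpace p r → ParamSpace p (r + 1) :=
    fun e => ⟨fun i => e.1 (g i), fun a b => e.2 _ _⟩
  have hj : Continuous j := by
    apply Continuous.subtype_mk
    apply continuous_pi
    intro i
    exact (continuous_apply (g i)).comp continuous_subtype_val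
  -- the key schedule identity
  have hkey : ∀ i : Fin r, φ (schedule r i) = schedule (r + 1) i.castSucc := by
    intro i
    have hiR : (i.1 : ℝ) ≤ (r : ℝ) - 1 := by
      have := i.2
      have : (i.1 : ℝ) + 1 ≤ (r : ℝ) := by exact_mod_cast this
      linarith
    have hmem1 : (i.1 : ℝ) / ((r : ℝ) - 1) ∈ Set.Icc (0 : ℝ) 1 := by
      constructor
      · exact div_nonneg (Nat.cast_nonneg _) (by linarith)
      · exact (div_le_one (by linarith)).2 hiR
    have hmem2 : (i.1 : ℝ) / (((r : ℝ) + 1) - 1) ∈ Set.Icc (0 : ℝ) 1 := by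
      constructor
      · exact div_nonneg (Nat.cast_nonneg _) (by linarith)
      · exact (div_le_one (by linarith)).2 (by linarith)
    have h1 : (schedule r i : ℝ) = (i.1 : ℝ) / ((r : ℝ) - 1) := by
      rw [schedule, Set.projIcc_of_mem _ hmem1]
    have h2 : (schedule (r + 1) i.castSucc : ℝ) = (i.1 : ℝ) / (((r : ℝ) + 1) - 1) := by
      rw [schedule]
      have hcast : ((i.castSucc : ℕ) : ℝ) / (((r + 1 : ℕ) : ℝ) - 1)
          = (i.1 : ℝ) / (((r : ℝ) + 1) - 1) := by
        push_cast [Fin.coe_castSucc]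
        ring_nf
      rw [hcast, Set.projIcc_of_mem _ hmem2]
    apply Subtype.ext
    show (schedule r i : ℝ) * c = (schedule (r + 1) i.castSucc : ℝ)
    rw [h1, h2, hc]
    have hne : (r : ℝ) - 1 ≠ 0 := by linarith
    field_simp
    rw [add_sub_cancel_right, mul_div_cancel_right₀ _ hr0.ne']
  refine ⟨fun i => j ⁻¹' U i, fun i => (hUo i).preimage hj, ?_, ?_⟩
  · ext e
    simp only [Set.mem_iUnion, Set.mem_preimage, Set.mem_univ, iff_true]
    have : j e ∈ ⋃ i, U i := by rw [hUc]; exact Set.mem_univ _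
    exact Set.mem_iUnion.1 this
  · intro i
    obtain ⟨s, hs⟩ := hUs i
    have c1 : Continuous fun x : ↥(j ⁻¹' U i) => (⟨j x.1, x.2⟩ : U i) :=
      Continuous.subtype_mk (hj.comp continuous_subtype_val) _
    have c2 : Continuous fun x : ↥(j ⁻¹' U i) =>
        ((s ⟨j x.1, x.2⟩ : FibConstPath p) : C(unitInterval, E)) :=
      continuous_subtype_val.comp (s.continuous.comp c1)
    have c3 : Continuous fun x : ↥(j ⁻¹' U i) =>
        ((s ⟨j x.1, x.2⟩ : FibConstPath p) : C(unitInterval, E)).comp φ :=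
      (ContinuousMap.continuous_precomp φ).comp c2
    refine ⟨⟨fun x => ⟨((s ⟨j x.1, x.2⟩ : FibConstPath p) : C(unitInterval, E)).comp φ,
        fun a b => (s ⟨j x.1, x.2⟩).2 _ _⟩, Continuous.subtype_mk c3 _⟩, ?_⟩
    intro x
    apply Subtype.ext
    funext i'
    show ((s ⟨j x.1, x.2⟩ : FibConstPath p) : C(unitInterval, E)) (φ (schedule r i')) = x.1.1 i'
    rw [hkey i']
    have := congrArg (fun z => z.1 i'.castSucc) (hs ⟨j x.1, x.2⟩)
    simp only [paramEval] at this
    rw [this]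
    show x.1.1 (g i'.castSucc) = x.1.1 i'
    rw [hg i']

/-- Monotonicity of sequential parametrized topological complexity in `r`. -/
theorem stmt9 {E B : Type u} [TopologicalSpace E] [TopologicalSpace B]
    (p : E → B) (hp : IsHurewiczFibration p) (r : ℕ) (hr : 2 ≤ r) :
    seqParamTC p r ≤ seqParamTC p (r + 1) := by
  apply iInf_le_iInf_of_subset
  intro k hk
  exact stmt9_aux p r hr k hk
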